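/- arXiv:2505.04076 — 4 statements merged into one kernel-verified Lean document; each statement's English description precedes it below -/
import Mathlib

section
/- For probability distributions p and q on a finite set X, the variational distance V(p,q) = Σ_{x∈X} |p(x) - q(x)| satisfies Pinsker's inequality: V(p,q) ≤ √(2 ln 2 · D(p‖q)), where D(p‖q) = Σ_x p(x) log(p(x)/q(x)) is the relative entropy with logarithm base 2. -/
open Finset

/-- `log t ≥ 1 - 1/t` for `t > 0`. -/
private lemma log_ge_one_sub_inv {t : ℝ} (ht : 0 < t) : 1 - t⁻¹ ≤ Real.log t := by
  have h := Real.log_le_sub_one_of_pos (inv_pos.mpr ht)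
  rw [Real.log_inv] at h
  linarith

/-- auxiliary function `h t = (t+1) log t - 2(t-1)` has derivative `log t + (t+1)/t - 2`. -/
private lemma hasDerivAt_h {x : ℝ} (hx : 0 < x) :
    HasDerivAt (fun t : ℝ => (t + 1) * Real.log t - 2 * (t - 1))
      (Real.log x + (x + 1) * x⁻¹ - 2) x := by
  have h1 : HasDerivAt (fun t : ℝ => (t + 1) * Real.log t)
      (1 * Real.log x + (x + 1) * x⁻¹) x :=
    (((hasDerivAt_id x).add_const 1).mul (Real.hasDerivAt_log hx.ne'))
  have h2 : HasDerivAt (fun t : ℝ => 2 * (t - 1)) 2 x := by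
    simpa using ((hasDerivAt_id x).sub_const 1).const_mul 2
  exact (h1.sub h2).congr_deriv (by ring)

/-- `h` is monotone hence sign determined by comparison with `t = 1`. -/
private lemma h_nonneg {t : ℝ} (ht : 1 ≤ t) :
    0 ≤ (t + 1) * Real.log t - 2 * (t - 1) := by
  have hmono : MonotoneOn (fun t : ℝ => (t + 1) * Real.log t - 2 * (t - 1)) (Set.Icc 1 t) := by
    apply monotoneOn_of_hasDerivWithinAt_nonneg (f' := fun x => Real.log x + (x + 1) * x⁻¹ - 2)
      (convex_Icc 1 t)
    · intro x hx
      have hx0 : (0:ℝ) < x := lt_of_lt_of_le one_pos hx.1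
      exact (hasDerivAt_h hx0).continuousAt.continuousWithinAt
    · intro x hx
      have hx0 : (0:ℝ) < x := by
        have := (interior_subset (s := Set.Icc 1 t)) hx
        exact lt_of_lt_of_le one_pos this.1
      exact (hasDerivAt_h hx0).hasDerivWithinAt
    · intro x hx
      have hx0 : (0:ℝ) < x := by
        have := (interior_subset (s := Set.Icc 1 t)) hx
        exact lt_of_lt_of_le one_pos this.1
      have hlog := log_ge_one_sub_inv hx0
      have : (x + 1) * x⁻¹ = 1 + x⁻¹ := by field_simp
      rw [this]
      linarith
  have h1 : (1:ℝ) ∈ Set.Icc 1 t := ⟨le_refl 1, ht⟩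
  have h2 : t ∈ Set.Icc 1 t := ⟨ht, le_refl t⟩
  have := hmono h1 h2 ht
  simpa using this

private lemma h_nonpos {t : ℝ} (ht0 : 0 < t) (ht : t ≤ 1) :
    (t + 1) * Real.log t - 2 * (t - 1) ≤ 0 := by
  have hmono : MonotoneOn (fun t : ℝ => (t + 1) * Real.log t - 2 * (t - 1)) (Set.Icc t 1) := by
    apply monotoneOn_of_hasDerivWithinAt_nonneg (f' := fun x => Real.log x + (x + 1) * x⁻¹ - 2)
      (convex_Icc t 1)
    · intro x hx
      have hx0 : (0:ℝ) < x := lt_of_lt_of_le ht0 hx.1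
      exact (hasDerivAt_h hx0).continuousAt.continuousWithinAt
    · intro x hx
      have hx0 : (0:ℝ) < x := lt_of_lt_of_le ht0 ((interior_subset (s := Set.Icc t 1)) hx).1
      exact (hasDerivAt_h hx0).hasDerivWithinAt
    · intro x hx
      have hx0 : (0:ℝ) < x := lt_of_lt_of_le ht0 ((interior_subset (s := Set.Icc t 1)) hx).1
      have hlog := log_ge_one_sub_inv hx0
      have : (x + 1) * x⁻¹ = 1 + x⁻¹ := by field_simp
      rw [this]
      linarith
  have h1 : t ∈ Set.Icc t 1 := ⟨le_refl t, ht⟩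
  have h2 : (1:ℝ) ∈ Set.Icc t 1 := ⟨ht, le_refl 1⟩
  have := hmono h1 h2 ht
  simpa using this

private lemma hasDerivAt_G {x : ℝ} (hx : 0 < x) :
    HasDerivAt (fun t : ℝ => (t * Real.log t - t + 1) * (t + 2) - 3 / 2 * (t - 1) ^ 2)
      (2 * ((x + 1) * Real.log x - 2 * (x - 1))) x := by
  have h1 : HasDerivAt (fun t : ℝ => t * Real.log t - t + 1) (Real.log x + 1 - 1) x :=
    ((Real.hasDerivAt_mul_log hx.ne').sub (hasDerivAt_id x)).add_const 1
  have h2 : HasDerivAt (fun t : ℝ => t + 2) 1 x := (hasDerivAt_id x).add_const 2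
  have h3 : HasDerivAt (fun t : ℝ => 3 / 2 * (t - 1) ^ 2) (3 / 2 * (2 * (x - 1) ^ 1 * 1)) x :=
    (((hasDerivAt_id x).sub_const 1).pow 2).const_mul (3/2)
  exact ((h1.mul h2).sub h3).congr_deriv (by ring)

/-- the key scalar inequality `(3/2)(t-1)² ≤ (t log t - t + 1)(t+2)` for `t > 0`. -/
private lemma G_nonneg {t : ℝ} (ht : 0 < t) :
    3 / 2 * (t - 1) ^ 2 ≤ (t * Real.log t - t + 1) * (t + 2) := by
  rw [← sub_nonneg]
  show 0 ≤ (fun t : ℝ => (t * Real.log t - t + 1) * (t + 2) - 3 / 2 * (t - 1) ^ 2) t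
  rcases le_total 1 t with h1t | ht1
  · have hmono : MonotoneOn
        (fun t : ℝ => (t * Real.log t - t + 1) * (t + 2) - 3 / 2 * (t - 1) ^ 2)
        (Set.Icc 1 t) := by
      apply monotoneOn_of_hasDerivWithinAt_nonneg
        (f' := fun x => 2 * ((x + 1) * Real.log x - 2 * (x - 1))) (convex_Icc 1 t)
      · intro x hx
        have hx0 : (0:ℝ) < x := lt_of_lt_of_le one_pos hx.1
        exact (hasDerivAt_G hx0).continuousAt.continuousWithinAt
      · intro x hx
        have hx0 : (0:ℝ) < x :=
          lt_of_lt_of_le one_pos ((interior_subset (s := Set.Icc 1 t)) hx).1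
        exact (hasDerivAt_G hx0).hasDerivWithinAt
      · intro x hx
        have hx1 : (1:ℝ) ≤ x := ((interior_subset (s := Set.Icc 1 t)) hx).1
        have := h_nonneg hx1
        linarith
    have := hmono ⟨le_refl 1, h1t⟩ ⟨h1t, le_refl t⟩ h1t
    simp only [Real.log_one] at this
    exact le_of_eq_of_le (by norm_num) this
  · have hanti : AntitoneOn
        (fun t : ℝ => (t * Real.log t - t + 1) * (t + 2) - 3 / 2 * (t - 1) ^ 2)
        (Set.Icc t 1) := by
      apply antitoneOn_of_hasDerivWithinAt_nonpos
        (f' := fun x => 2 * ((x + 1) * Real.log x - 2 * (x - 1))) (convex_Icc t 1)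
      · intro x hx
        have hx0 : (0:ℝ) < x := lt_of_lt_of_le ht hx.1
        exact (hasDerivAt_G hx0).continuousAt.continuousWithinAt
      · intro x hx
        have hx0 : (0:ℝ) < x := lt_of_lt_of_le ht ((interior_subset (s := Set.Icc t 1)) hx).1
        exact (hasDerivAt_G hx0).hasDerivWithinAt
      · intro x hx
        have hmem := (interior_subset (s := Set.Icc t 1)) hx
        have hx0 : (0:ℝ) < x := lt_of_lt_of_le ht hmem.1
        have := h_nonpos hx0 hmem.2
        linarith
    have := hanti ⟨le_refl t, ht1⟩ ⟨ht1, le_refl 1⟩ ht1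
    simp only [Real.log_one] at this
    exact le_of_eq_of_le (by norm_num) this

/-- Pointwise inequality: `a - b + (3/2)(a-b)²/(a+2b) ≤ a log(a/b)` under sign conditions,
with Lean's `x/0 = 0` and `log 0 = 0` conventions. -/
private lemma pointwise (a b : ℝ) (ha : 0 ≤ a) (hb : 0 ≤ b) (hab : 0 < a → 0 < b) :
    a - b + 3 / 2 * (a - b) ^ 2 / (a + 2 * b) ≤ a * Real.log (a / b) := by
  rcases eq_or_lt_of_le ha with ha0 | ha0
  · -- a = 0
    rcases eq_or_lt_of_le hb with hb0 | hb0
    · rw [← ha0, ← hb0]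
      norm_num
    · rw [← ha0]
      have hd : (0:ℝ) + 2 * b > 0 := by linarith
      have : 3 / 2 * (0 - b) ^ 2 / (0 + 2 * b) = 3 / 4 * b := by
        field_simp
        ring
      rw [this]
      simp only [zero_mul]
      linarith
  · -- a > 0, hence b > 0
    have hb0 : 0 < b := hab ha0
    set t : ℝ := a / b with htdef
    have ht : 0 < t := div_pos ha0 hb0
    have hG := G_nonneg ht
    have ha' : a = b * t := by rw [htdef, mul_comm, div_mul_cancel₀ _ hb0.ne']
    have hd : 0 < a + 2 * b := by linarith
    have key : 3 / 2 * (a - b) ^ 2 / (a + 2 * b) ≤ a * Real.log t - a + b := by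
      rw [div_le_iff₀ hd, ha']
      nlinarith [mul_le_mul_of_nonneg_left hG (sq_nonneg b), sq_nonneg b, hb0.le]
    linarith

/-- Pinsker's inequality (base-2 relative entropy): the variational distance
`V(p,q) = ∑ |p x - q x|` is at most `√(2 ln 2 · D(p‖q))`. -/
theorem pinsker_inequality {X : Type*} [Fintype X] (p q : X → ℝ)
    (hp0 : ∀ x, 0 ≤ p x) (hq0 : ∀ x, 0 ≤ q x)
    (hp1 : ∑ x, p x = 1) (hq1 : ∑ x, q x = 1)
    (habs : ∀ x, 0 < p x → 0 < q x) :
    ∑ x, |p x - q x| ≤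
      Real.sqrt (2 * Real.log 2 * (∑ x, p x * Real.logb 2 (p x / q x))) := by
  set F : X → ℝ := fun x => (p x - q x) ^ 2 / (p x + 2 * q x) with hF
  -- Step 1 : ln 2 · D ≥ (3/2) ∑ F
  have hD : 3 / 2 * ∑ x, F x ≤ ∑ x, p x * Real.log (p x / q x) := by
    have hsum : ∑ x, ((p x - q x) + 3 / 2 * (p x - q x) ^ 2 / (p x + 2 * q x)) ≤
        ∑ x, p x * Real.log (p x / q x) :=
      Finset.sum_le_sum fun x _ => pointwise (p x) (q x) (hp0 x) (hq0 x) (habs x)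
    have hsplit : ∑ x, ((p x - q x) + 3 / 2 * (p x - q x) ^ 2 / (p x + 2 * q x)) =
        (∑ x, (p x - q x)) + 3 / 2 * ∑ x, F x := by
      rw [Finset.sum_add_distrib, Finset.mul_sum]
      congr 1
      apply Finset.sum_congr rfl
      intro x _
      rw [hF]
      ring
    have hzero : ∑ x, (p x - q x) = 0 := by
      rw [Finset.sum_sub_distrib, hp1, hq1]; ring
    rw [hsplit, hzero, zero_add] at hsum
    exact hsum
  -- Step 2 : Cauchy–Schwarz : (∑ |p - q|)² ≤ 3 ∑ F
  have hCS : (∑ x, |p x - q x|) ^ 2 ≤ 3 * ∑ x, F x := by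
    have hcs := Finset.sum_mul_sq_le_sq_mul_sq Finset.univ
      (fun x => Real.sqrt (p x + 2 * q x))
      (fun x => |p x - q x| / Real.sqrt (p x + 2 * q x))
    have h1 : ∀ x : X, Real.sqrt (p x + 2 * q x) * (|p x - q x| / Real.sqrt (p x + 2 * q x)) =
        |p x - q x| := by
      intro x
      rcases eq_or_lt_of_le (by nlinarith [hp0 x, hq0 x] : (0:ℝ) ≤ p x + 2 * q x) with h | h
      · have hp' : p x = 0 := by nlinarith [hp0 x, hq0 x]
        have hq' : q x = 0 := by nlinarith [hp0 x, hq0 x]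
        simp [hp', hq']
      · have hne : Real.sqrt (p x + 2 * q x) ≠ 0 := (Real.sqrt_ne_zero'.mpr h)
        rw [mul_comm, div_mul_cancel₀ _ hne]
    have h2 : ∀ x : X, (Real.sqrt (p x + 2 * q x)) ^ 2 = p x + 2 * q x := by
      intro x
      exact Real.sq_sqrt (by nlinarith [hp0 x, hq0 x])
    have h3 : ∀ x : X, (|p x - q x| / Real.sqrt (p x + 2 * q x)) ^ 2 = F x := by
      intro x
      rw [div_pow, sq_abs, Real.sq_sqrt (by nlinarith [hp0 x, hq0 x] : (0:ℝ) ≤ p x + 2 * q x)]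
    calc (∑ x, |p x - q x|) ^ 2
        = (∑ x, Real.sqrt (p x + 2 * q x) * (|p x - q x| / Real.sqrt (p x + 2 * q x))) ^ 2 := by
          congr 1; exact (Finset.sum_congr rfl fun x _ => (h1 x)).symm
      _ ≤ (∑ x, (Real.sqrt (p x + 2 * q x)) ^ 2) *
            ∑ x, (|p x - q x| / Real.sqrt (p x + 2 * q x)) ^ 2 := hcs
      _ = 3 * ∑ x, F x := by
          congr 1
          · rw [Finset.sum_congr rfl fun x _ => h2 x, Finset.sum_add_distrib, hp1,
              ← Finset.mul_sum, hq1]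
            norm_num
          · exact Finset.sum_congr rfl fun x _ => h3 x
  -- Step 3: relate logb with log
  have hlogb : 2 * Real.log 2 * (∑ x, p x * Real.logb 2 (p x / q x)) =
      2 * ∑ x, p x * Real.log (p x / q x) := by
    have hlog2 : Real.log 2 ≠ 0 := by
      have := Real.log_pos (by norm_num : (1:ℝ) < 2); linarith
    rw [Finset.mul_sum, Finset.mul_sum]
    apply Finset.sum_congr rfl
    intro x _
    rw [Real.logb, div_eq_inv_mul]
    field_simp
  -- Conclusion
  have hV0 : 0 ≤ ∑ x, |p x - q x| := Finset.sum_nonneg fun x _ => abs_nonneg _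
  rw [hlogb]
  rw [Real.le_sqrt hV0 (by nlinarith [sq_nonneg (∑ x, |p x - q x|)])]
  nlinarith
end

section
/- Leftover hash lemma (min-entropy version): let (U, Z) be jointly distributed random variables on finite sets, let F : R × U → {0,1}^r be drawn from a 2-universal family with R chosen uniformly and independently of (U, Z). If the conditional min-entropy H_∞(U|Z) := min_{z: p_Z(z)>0} min_u log(p_Z(z)/p_{UZ}(u,z)) satisfies H_∞(U|Z) ≥ r + 2 log(1/δ), then V(p_{F(R,U),R,Z}, u_r × p_R × p_Z) ≤ 2δ, where u_r is the uniform distribution on {0,1}^r. -/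
open Finset

open Classical in
theorem slice_lemma {U R : Type*} [Fintype U] [Fintype R] [Nonempty R]
    {r : ℕ} (F : R → U → (Fin r → Bool))
    (q : U → ℝ) (hq0 : ∀ u, 0 ≤ q u)
    (δ : ℝ) (hδ : 0 < δ)
    (huniv : ∀ u u' : U, u ≠ u' →
      ((Finset.univ.filter (fun ρ : R => F ρ u = F ρ u')).card : ℝ) / Fintype.card R
        ≤ ((2 : ℝ) ^ r)⁻¹)
    (hmin : ∀ u : U, q u ≤ (∑ u', q u') * δ ^ 2 * ((2 : ℝ) ^ r)⁻¹) :
    ∑ x : Fin r → Bool, ∑ ρ : R,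
      |(Fintype.card R : ℝ)⁻¹ * ∑ u, (if F ρ u = x then q u else 0)
        - ((2 : ℝ) ^ r)⁻¹ * (Fintype.card R : ℝ)⁻¹ * ∑ u, q u|
      ≤ δ * ∑ u, q u := by
  set cR : ℝ := (Fintype.card R : ℝ) with hcR
  have hcRpos : (0:ℝ) < cR := by
    rw [hcR]; exact_mod_cast Fintype.card_pos (α := R)
  have h2r : (0:ℝ) < (2:ℝ)^r := by positivity
  set s : ℝ := ∑ u, q u with hs
  have hs0 : 0 ≤ s := Finset.sum_nonneg fun u _ => hq0 u
  set m : ℝ := ((2:ℝ)^r)⁻¹ * cR⁻¹ * s with hm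
  set f : (Fin r → Bool) × R → ℝ :=
    fun t => cR⁻¹ * ∑ u, (if F t.2 u = t.1 then q u else 0) with hf
  -- sum of f over all (x, ρ)
  have hsumf : ∑ t : (Fin r → Bool) × R, f t = s := by
    rw [Fintype.sum_prod_type, Finset.sum_comm]
    have : ∀ ρ : R, ∑ x : Fin r → Bool, f (x, ρ) = cR⁻¹ * s := by
      intro ρ
      simp only [hf]
      rw [← Finset.mul_sum, Finset.sum_comm]
      simp [Finset.sum_ite_eq]
      exact Or.inl hs.symm
    rw [Finset.sum_congr rfl fun ρ _ => this ρ, Finset.sum_const]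
    simp only [Finset.card_univ, nsmul_eq_mul]
    rw [← hcR]
    field_simp
  -- collision bound
  have hinner : ∀ ρ : R, ∑ x : Fin r → Bool, (∑ u, (if F ρ u = x then q u else 0))^2
      = ∑ u : U, ∑ u' : U, (if F ρ u = F ρ u' then q u * q u' else 0) := by
    intro ρ
    simp_rw [sq, Finset.sum_mul_sum]
    rw [Finset.sum_comm]
    refine Finset.sum_congr rfl fun u _ => ?_
    rw [Finset.sum_comm]
    refine Finset.sum_congr rfl fun u' _ => ?_
    simp [ite_zero_mul_ite_zero, Finset.sum_ite_eq, eq_comm]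
  have hsq : ∑ t : (Fin r → Bool) × R, (f t)^2
      ≤ (1 + δ^2) * (((2:ℝ)^r)⁻¹ * (cR⁻¹ * s^2)) := by
    have step1 : ∑ t : (Fin r → Bool) × R, (f t)^2
        = cR⁻¹^2 * ∑ ρ : R, ∑ u : U, ∑ u' : U,
            (if F ρ u = F ρ u' then q u * q u' else 0) := by
      rw [Fintype.sum_prod_type]
      simp_rw [hf, mul_pow, ← Finset.mul_sum]
      rw [Finset.sum_comm]
      congr 1
      exact Finset.sum_congr rfl fun ρ _ => hinner ρ
    have step2 : ∑ ρ : R, ∑ u : U, ∑ u' : U,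
          (if F ρ u = F ρ u' then q u * q u' else 0)
        = ∑ u : U, ∑ u' : U,
            ((Finset.univ.filter (fun ρ : R => F ρ u = F ρ u')).card : ℝ) * (q u * q u') := by
      rw [Finset.sum_comm]
      refine Finset.sum_congr rfl fun u _ => ?_
      rw [Finset.sum_comm]
      refine Finset.sum_congr rfl fun u' _ => ?_
      rw [← Finset.sum_filter, Finset.sum_const, nsmul_eq_mul]
    have hbd : ∀ u u' : U,
        ((Finset.univ.filter (fun ρ : R => F ρ u = F ρ u')).card : ℝ) * (q u * q u')
        ≤ (if u = u' then (s * δ^2 * ((2:ℝ)^r)⁻¹) * (cR * q u) else 0)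
          + ((2:ℝ)^r)⁻¹ * cR * (q u * q u') := by
      intro u u'
      by_cases h : u = u'
      · subst h
        rw [if_pos rfl]
        have hcnt : ((Finset.univ.filter (fun ρ : R => F ρ u = F ρ u)).card : ℝ) ≤ cR := by
          rw [hcR]; exact_mod_cast Finset.card_filter_le _ _
        have h1 : ((Finset.univ.filter (fun ρ : R => F ρ u = F ρ u)).card : ℝ) * (q u * q u)
            ≤ cR * (q u * q u) :=
          mul_le_mul_of_nonneg_right hcnt (mul_nonneg (hq0 u) (hq0 u))
        have h2 : cR * (q u * q u) ≤ cR * ((s * δ^2 * ((2:ℝ)^r)⁻¹) * q u) := by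
          apply mul_le_mul_of_nonneg_left _ hcRpos.le
          exact mul_le_mul_of_nonneg_right (hmin u) (hq0 u)
        have h3 : cR * (s * δ^2 * ((2:ℝ)^r)⁻¹ * q u)
            = (s * δ^2 * ((2:ℝ)^r)⁻¹) * (cR * q u) := by ring
        have hB : 0 ≤ ((2:ℝ)^r)⁻¹ * cR * (q u * q u) :=
          mul_nonneg (mul_nonneg (inv_nonneg.2 h2r.le) hcRpos.le) (mul_nonneg (hq0 u) (hq0 u))
        rw [h3] at h2
        linarith [h1.trans h2, hB]
      · have hcnt := huniv u u' h
        rw [div_le_iff₀ hcRpos] at hcnt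
        simp only [if_neg h, zero_add]
        calc ((Finset.univ.filter (fun ρ : R => F ρ u = F ρ u')).card : ℝ) * (q u * q u')
            ≤ (((2:ℝ)^r)⁻¹ * cR) * (q u * q u') :=
              mul_le_mul_of_nonneg_right hcnt (mul_nonneg (hq0 u) (hq0 u'))
          _ = ((2:ℝ)^r)⁻¹ * cR * (q u * q u') := by ring
    have hbsum : ∑ u : U, ∑ u' : U,
          ((if u = u' then (s * δ^2 * ((2:ℝ)^r)⁻¹) * (cR * q u) else 0)
            + ((2:ℝ)^r)⁻¹ * cR * (q u * q u'))
        = (1 + δ^2) * (((2:ℝ)^r)⁻¹ * (cR * s^2)) := by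
      simp only [Finset.sum_add_distrib, Finset.sum_ite_eq, Finset.mem_univ, if_true]
      have e1 : ∑ u : U, (s * δ^2 * ((2:ℝ)^r)⁻¹) * (cR * q u)
          = (s * δ^2 * ((2:ℝ)^r)⁻¹) * (cR * s) := by
        rw [← Finset.mul_sum, ← Finset.mul_sum]
      have e2 : ∑ u : U, ∑ u' : U, ((2:ℝ)^r)⁻¹ * cR * (q u * q u')
          = ((2:ℝ)^r)⁻¹ * cR * (s * s) := by
        simp_rw [← Finset.mul_sum, ← Finset.sum_mul]
        rw [← hs]
      rw [e1, e2]; ring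
    rw [step1, step2]
    calc cR⁻¹^2 * ∑ u : U, ∑ u' : U,
          ((Finset.univ.filter (fun ρ : R => F ρ u = F ρ u')).card : ℝ) * (q u * q u')
        ≤ cR⁻¹^2 * ((1 + δ^2) * (((2:ℝ)^r)⁻¹ * (cR * s^2))) := by
          apply mul_le_mul_of_nonneg_left _ (by positivity)
          rw [← hbsum]
          exact Finset.sum_le_sum fun u _ => Finset.sum_le_sum fun u' _ => hbd u u'
      _ = (1 + δ^2) * (((2:ℝ)^r)⁻¹ * (cR⁻¹ * s^2)) := by
          field_simp
  -- variance bound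
  have hcard : ((Fintype.card ((Fin r → Bool) × R) : ℝ)) = (2:ℝ)^r * cR := by
    rw [Fintype.card_prod]
    push_cast
    congr 1
    · norm_cast
      simp [Fintype.card_fun]
  have hvar : ∑ t : (Fin r → Bool) × R, (f t - m)^2
      ≤ δ^2 * (((2:ℝ)^r)⁻¹ * (cR⁻¹ * s^2)) := by
    have expand : ∑ t : (Fin r → Bool) × R, (f t - m)^2
        = (∑ t, (f t)^2) - (∑ t, f t) * (2*m) + ((2:ℝ)^r * cR) * m^2 := by
      simp_rw [sub_sq, show ∀ a : ℝ, 2*a*m = a*(2*m) from fun a => by ring]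
      rw [Finset.sum_add_distrib, Finset.sum_sub_distrib, ← Finset.sum_mul,
        Finset.sum_const, Finset.card_univ, nsmul_eq_mul, hcard]
    rw [expand, hsumf]
    have hmval : ((2:ℝ)^r * cR) * m^2 = m * s := by
      rw [hm]; field_simp
    have hms : m * s = ((2:ℝ)^r)⁻¹ * (cR⁻¹ * s^2) := by rw [hm]; ring
    nlinarith [hsq]
  -- Cauchy–Schwarz
  have hCS : (∑ t : (Fin r → Bool) × R, |f t - m|)^2
      ≤ ((2:ℝ)^r * cR) * ∑ t : (Fin r → Bool) × R, (f t - m)^2 := by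
    have := sq_sum_le_card_mul_sum_sq (s := (Finset.univ : Finset ((Fin r → Bool) × R)))
      (f := fun t => |f t - m|)
    simp_rw [sq_abs] at this
    rw [Finset.card_univ] at this
    calc (∑ t : (Fin r → Bool) × R, |f t - m|)^2
        ≤ (Fintype.card ((Fin r → Bool) × R) : ℝ) * ∑ t, (f t - m)^2 := this
      _ = ((2:ℝ)^r * cR) * ∑ t, (f t - m)^2 := by rw [hcard]
  have hfin : (∑ t : (Fin r → Bool) × R, |f t - m|)^2 ≤ (δ * s)^2 := by
    calc (∑ t : (Fin r → Bool) × R, |f t - m|)^2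
        ≤ ((2:ℝ)^r * cR) * ∑ t, (f t - m)^2 := hCS
      _ ≤ ((2:ℝ)^r * cR) * (δ^2 * (((2:ℝ)^r)⁻¹ * (cR⁻¹ * s^2))) :=
          mul_le_mul_of_nonneg_left hvar (by positivity)
      _ = (δ * s)^2 := by field_simp
  have habs : 0 ≤ ∑ t : (Fin r → Bool) × R, |f t - m| :=
    Finset.sum_nonneg fun t _ => abs_nonneg _
  have hres : ∑ t : (Fin r → Bool) × R, |f t - m| ≤ δ * s := by
    nlinarith [mul_nonneg hδ.le hs0]
  calc ∑ x : Fin r → Bool, ∑ ρ : R, |cR⁻¹ * (∑ u, if F ρ u = x then q u else 0) - ((2:ℝ)^r)⁻¹ * cR⁻¹ * s|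
      = ∑ t : (Fin r → Bool) × R, |f t - m| := by rw [Fintype.sum_prod_type]
    _ ≤ δ * s := hres

open Classical in
/-- Leftover hash lemma (min-entropy version, `ε = 0` smoothing): if `F` is drawn
uniformly from a 2-universal family `R` of hash functions into `{0,1}^r`, and the
conditional min-entropy of `U` given `Z` satisfies `H_∞(U|Z) ≥ r + 2 log(1/δ)`
(equivalently `p(u,z) ≤ p_Z(z)·δ²·2^{-r}` on the support of `p_Z`), then the joint
distribution of `(F(R,U), R, Z)` is within variational distance `2δ` of
`uniform × uniform × p_Z`. -/
theorem leftover_hash_lemma {U Z R : Type*} [Fintype U] [Fintype Z] [Fintype R] [Nonempty R]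
    {r : ℕ} (F : R → U → (Fin r → Bool))
    (p : U × Z → ℝ) (hp0 : ∀ w, 0 ≤ p w) (hp1 : ∑ w, p w = 1)
    (δ : ℝ) (hδ : 0 < δ)
    (huniv : ∀ u u' : U, u ≠ u' →
      ((Finset.univ.filter (fun ρ : R => F ρ u = F ρ u')).card : ℝ) / Fintype.card R
        ≤ ((2 : ℝ) ^ r)⁻¹)
    (hmin : ∀ (u : U) (z : Z), 0 < (∑ u', p (u', z)) →
      p (u, z) ≤ (∑ u', p (u', z)) * δ ^ 2 * ((2 : ℝ) ^ r)⁻¹) :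
    ∑ t : (Fin r → Bool) × R × Z,
      |(Fintype.card R : ℝ)⁻¹ * ∑ u, (if F t.2.1 u = t.1 then p (u, t.2.2) else 0)
        - ((2 : ℝ) ^ r)⁻¹ * (Fintype.card R : ℝ)⁻¹ * ∑ u, p (u, t.2.2)|
      ≤ 2 * δ := by
  have key : ∀ z : Z, ∑ x : Fin r → Bool, ∑ ρ : R,
      |(Fintype.card R : ℝ)⁻¹ * ∑ u, (if F ρ u = x then p (u, z) else 0)
        - ((2 : ℝ) ^ r)⁻¹ * (Fintype.card R : ℝ)⁻¹ * ∑ u, p (u, z)|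
      ≤ δ * ∑ u, p (u, z) := by
    intro z
    apply slice_lemma F (fun u => p (u, z)) (fun u => hp0 (u, z)) δ hδ huniv
    intro u
    rcases lt_or_eq_of_le (Finset.sum_nonneg fun u' _ => hp0 (u', z)) with h | h
    · exact hmin u z h
    · have hz : ∀ u' : U, p (u', z) = 0 := by
        intro u'
        have := (Finset.sum_eq_zero_iff_of_nonneg fun u' _ => hp0 (u', z)).1 h.symm
        exact this u' (Finset.mem_univ u')
      simp [hz]
  calc ∑ t : (Fin r → Bool) × R × Z,
        |(Fintype.card R : ℝ)⁻¹ * ∑ u, (if F t.2.1 u = t.1 then p (u, t.2.2) else 0)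
          - ((2 : ℝ) ^ r)⁻¹ * (Fintype.card R : ℝ)⁻¹ * ∑ u, p (u, t.2.2)|
      = ∑ z : Z, ∑ x : Fin r → Bool, ∑ ρ : R,
          |(Fintype.card R : ℝ)⁻¹ * ∑ u, (if F ρ u = x then p (u, z) else 0)
            - ((2 : ℝ) ^ r)⁻¹ * (Fintype.card R : ℝ)⁻¹ * ∑ u, p (u, z)| := by
        rw [Fintype.sum_prod_type]
        simp_rw [Fintype.sum_prod_type]
        rw [show (∑ x : Fin r → Bool, ∑ ρ : R, ∑ z : Z,
            |(Fintype.card R : ℝ)⁻¹ * ∑ u, (if F ρ u = x then p (u, z) else 0)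
              - ((2 : ℝ) ^ r)⁻¹ * (Fintype.card R : ℝ)⁻¹ * ∑ u, p (u, z)|)
          = ∑ x : Fin r → Bool, ∑ z : Z, ∑ ρ : R,
            |(Fintype.card R : ℝ)⁻¹ * ∑ u, (if F ρ u = x then p (u, z) else 0)
              - ((2 : ℝ) ^ r)⁻¹ * (Fintype.card R : ℝ)⁻¹ * ∑ u, p (u, z)|
          from Finset.sum_congr rfl fun x _ => Finset.sum_comm]
        exact Finset.sum_comm
    _ ≤ ∑ z : Z, δ * ∑ u, p (u, z) := Finset.sum_le_sum fun z _ => key z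
    _ = δ * ∑ z : Z, ∑ u, p (u, z) := by rw [Finset.mul_sum]
    _ = δ := by
        rw [Finset.sum_comm]
        rw [show ∑ u : U, ∑ z : Z, p (u, z) = 1 from by rw [← Fintype.sum_prod_type] at *; exact hp1]
        ring
    _ ≤ 2 * δ := by linarith
end

section
/- For i.i.d. pairs (X_i, Z_i), i=1..L, with joint pmf p_{XZ} on finite sets X × Z, and for any δ > 0, the ε-smooth conditional min-entropy satisfies H_∞^ε(p_{X^L Z^L} | p_{Z^L}) ≥ L·H(X|Z) − Lδ, where ε = 2^{−Lδ²/(2 log²(|X|+3))}. -/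
open Finset

lemma aux_exp_quad (u : ℝ) (hu : u ≤ 0) : Real.exp u ≤ 1 + u + u ^ 2 / 2 := by
  set v : ℝ := -u with hv
  have hv0 : 0 ≤ v := by simp [hv]; linarith
  have hcube : 1 + v + v ^ 2 / 2 ≤ Real.exp v := by
    have := Real.sum_le_exp_of_nonneg hv0 3
    simp [Finset.sum_range_succ, Nat.factorial] at this
    nlinarith [this]
  have hP : (0:ℝ) < 1 + v + v ^ 2 / 2 := by nlinarith
  have hexpv : 0 < Real.exp v := Real.exp_pos v
  have h1 : Real.exp u = (Real.exp v)⁻¹ := by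
    rw [hv, Real.exp_neg, inv_inv]
  rw [h1]
  have h2 : (Real.exp v)⁻¹ ≤ (1 + v + v ^ 2 / 2)⁻¹ :=
    inv_anti₀ hP hcube
  refine h2.trans ?_
  rw [inv_le_iff_one_le_mul₀ hP]
  have : (1 + u + u ^ 2 / 2) * (1 + v + v ^ 2 / 2) = 1 + v ^ 4 / 4 := by
    rw [hv]; ring
  nlinarith [pow_le_pow_left₀ (le_refl (0:ℝ)) hv0 4, sq_nonneg v, sq_nonneg (v^2)]

lemma aux_y (y α : ℝ) (h0 : 0 ≤ y) (h1 : y ≤ 1) (hα : 0 < α) :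
    y ^ α * Real.log y ^ 2 ≤ 4 / (α ^ 2 * Real.exp 2) := by
  have hpos : 0 < α ^ 2 * Real.exp 2 := by positivity
  rcases eq_or_lt_of_le h0 with h | h
  · rw [← h, Real.zero_rpow (ne_of_gt hα)]
    simp
    positivity
  · set v : ℝ := -(α * Real.log y) with hv
    have hlogy : Real.log y ≤ 0 := Real.log_nonpos h0 h1
    have hv0 : 0 ≤ v := by
      rw [hv]; nlinarith
    have hy : y ^ α = Real.exp (-v) := by
      rw [Real.rpow_def_of_pos h, hv]
      ring_nf
    have hlog2 : Real.log y ^ 2 = v ^ 2 / α ^ 2 := by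
      rw [hv]; field_simp
    rw [hy, hlog2]
    -- v^2 * exp (-v) ≤ 4 * exp (-2)
    have key : v ^ 2 * Real.exp (-v) ≤ 4 * Real.exp (-2) := by
      have h' : v / 2 ≤ Real.exp (v / 2 - 1) := by
        have := Real.add_one_le_exp (v / 2 - 1)
        linarith
      have hsq : (v / 2) ^ 2 ≤ Real.exp (v / 2 - 1) ^ 2 := by
        apply pow_le_pow_left₀ (by linarith) h'
      have he : Real.exp (v / 2 - 1) ^ 2 = Real.exp (v - 2) := by
        rw [← Real.exp_nat_mul]; norm_num; ring_nf
      rw [he] at hsq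
      have : v ^ 2 ≤ 4 * Real.exp (v - 2) := by nlinarith
      calc v ^ 2 * Real.exp (-v) ≤ 4 * Real.exp (v - 2) * Real.exp (-v) := by
            apply mul_le_mul_of_nonneg_right this (le_of_lt (Real.exp_pos _))
        _ = 4 * Real.exp (-2) := by rw [mul_assoc, ← Real.exp_add]; ring_nf
    have hexp2 : Real.exp (-2) * Real.exp 2 = 1 := by
      rw [← Real.exp_add]; norm_num
    rw [show Real.exp (-v) * (v ^ 2 / α ^ 2) = (v ^ 2 * Real.exp (-v)) / α ^ 2 by ring]
    rw [div_le_div_iff₀ (by positivity) hpos]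
    calc v ^ 2 * Real.exp (-v) * (α ^ 2 * Real.exp 2)
        = (v ^ 2 * Real.exp (-v)) * Real.exp 2 * α ^ 2 := by ring
      _ ≤ (4 * Real.exp (-2)) * Real.exp 2 * α ^ 2 := by
          apply mul_le_mul_of_nonneg_right
          · apply mul_le_mul_of_nonneg_right key (le_of_lt (Real.exp_pos _))
          · positivity
      _ = 4 * (Real.exp (-2) * Real.exp 2) * α ^ 2 := by ring
      _ = 4 * α ^ 2 := by rw [hexp2]; ring

lemma aux_holder {X : Type*} [Fintype X] (q : X → ℝ) (h0 : ∀ x, 0 ≤ q x)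
    (h1 : ∑ x, q x = 1) (α : ℝ) (hα0 : 0 < α) (hα1 : α ≤ 1) :
    ∑ x, q x ^ (1 - α) ≤ (Fintype.card X : ℝ) ^ α := by
  have hne : Nonempty X := by
    by_contra h
    rw [not_nonempty_iff] at h
    rw [Finset.univ_eq_empty, Finset.sum_empty] at h1
    norm_num at h1
  have hcard : 0 < Fintype.card X := Fintype.card_pos
  have hN : (0:ℝ) < (Fintype.card X : ℝ) := by exact_mod_cast hcard
  set N : ℝ := (Fintype.card X : ℝ) with hNdef
  have key : ∀ x, q x ^ (1 - α) ≤ ((1 - α) * q x + α * N⁻¹) * N ^ α := by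
    intro x
    have hgm : q x ^ (1 - α) * (N⁻¹) ^ α ≤ (1 - α) * q x + α * N⁻¹ :=
      Real.geom_mean_le_arith_mean2_weighted (by linarith) (le_of_lt hα0)
        (h0 x) (by positivity) (by ring)
    have hNα : (N⁻¹) ^ α * N ^ α = 1 := by
      rw [← Real.mul_rpow (by positivity) (le_of_lt hN)]
      rw [inv_mul_cancel₀ (ne_of_gt hN), Real.one_rpow]
    calc q x ^ (1 - α) = q x ^ (1 - α) * ((N⁻¹) ^ α * N ^ α) := by rw [hNα, mul_one]
      _ = (q x ^ (1 - α) * (N⁻¹) ^ α) * N ^ α := by ring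
      _ ≤ ((1 - α) * q x + α * N⁻¹) * N ^ α := by
          apply mul_le_mul_of_nonneg_right hgm (by positivity)
  calc ∑ x, q x ^ (1 - α) ≤ ∑ x, ((1 - α) * q x + α * N⁻¹) * N ^ α :=
        Finset.sum_le_sum fun x _ => key x
    _ = ((1 - α) * (∑ x, q x) + α * (N * N⁻¹)) * N ^ α := by
        rw [← Finset.sum_mul, Finset.sum_add_distrib, ← Finset.mul_sum,
          Finset.sum_const, Finset.card_univ, nsmul_eq_mul, ← hNdef]
        ring_nf
    _ = N ^ α := by
        rw [h1, mul_inv_cancel₀ (ne_of_gt hN)]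
        ring_nf

lemma aux_entmoment {X : Type*} [Fintype X] (q : X → ℝ) (h0 : ∀ x, 0 ≤ q x)
    (h1 : ∑ x, q x = 1) :
    ∑ x, q x * Real.log (q x) ^ 2
      ≤ Real.log ((Fintype.card X : ℝ) + 3) ^ 2 / Real.log 2 := by
  have hne : Nonempty X := by
    by_contra h
    rw [not_nonempty_iff] at h
    rw [Finset.univ_eq_empty, Finset.sum_empty] at h1
    norm_num at h1
  have hcard : 1 ≤ Fintype.card X := Fintype.card_pos
  have hN1 : (1:ℝ) ≤ (Fintype.card X : ℝ) := by exact_mod_cast hcard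
  set N : ℝ := (Fintype.card X : ℝ) with hNdef
  set A : ℝ := Real.log (N + 3) with hAdef
  have hlog2 : (0.6931471803:ℝ) < Real.log 2 := Real.log_two_gt_d9
  have hlog2' : Real.log 2 < 1 := by
    have := Real.log_lt_sub_one_of_pos (by norm_num : (0:ℝ) < 2) (by norm_num)
    linarith
  have hA4 : 2 * Real.log 2 ≤ A := by
    rw [hAdef, show (2:ℝ) * Real.log 2 = Real.log (2 ^ (2:ℕ)) by
      rw [Real.log_pow]; push_cast; ring]
    apply Real.log_le_log (by norm_num)
    norm_num; linarith
  have hA0 : 0 < A := by nlinarith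
  have hq1 : ∀ x, q x ≤ 1 := by
    intro x
    calc q x ≤ ∑ y, q y := Finset.single_le_sum (fun y _ => h0 y) (Finset.mem_univ x)
      _ = 1 := h1
  have hexp2 : 0 < Real.exp 2 := Real.exp_pos 2
  by_cases hA2 : 2 ≤ A
  · -- use α = 2 / A
    set α : ℝ := 2 / A with hαdef
    have hα0 : 0 < α := by positivity
    have hα1 : α ≤ 1 := by
      rw [hαdef, div_le_one hA0]; exact hA2
    have key : ∀ x, q x * Real.log (q x) ^ 2 ≤ 4 / (α ^ 2 * Real.exp 2) * q x ^ (1 - α) := by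
      intro x
      rcases eq_or_lt_of_le (h0 x) with h | h
      · rw [← h]
        simp only [zero_mul]
        positivity
      · have := aux_y (q x) α (h0 x) (hq1 x) hα0
        have hsplit : q x ^ (1 - α) * q x ^ α = q x := by
          rw [← Real.rpow_add h]; norm_num
        calc q x * Real.log (q x) ^ 2 = q x ^ (1-α) * (q x ^ α * Real.log (q x) ^ 2) := by
              nth_rewrite 1 [← hsplit]; ring
          _ ≤ q x ^ (1-α) * (4 / (α ^ 2 * Real.exp 2)) := by
              apply mul_le_mul_of_nonneg_left this (Real.rpow_nonneg (h0 x) _)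
          _ = 4 / (α ^ 2 * Real.exp 2) * q x ^ (1 - α) := by ring
    have hsum : ∑ x, q x * Real.log (q x) ^ 2
        ≤ 4 / (α ^ 2 * Real.exp 2) * ∑ x, q x ^ (1 - α) := by
      rw [Finset.mul_sum]
      exact Finset.sum_le_sum fun x _ => key x
    have hhold := aux_holder q h0 h1 α hα0 hα1
    have hNbound : (N : ℝ) ^ α ≤ (N + 3) ^ α :=
      Real.rpow_le_rpow (by linarith) (by linarith) (le_of_lt hα0)
    have hN3 : (N + 3) ^ α = Real.exp 2 := by
      rw [Real.rpow_def_of_pos (by linarith), hαdef]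
      congr 1
      field_simp
      exact hAdef.symm
    have hfinal : 4 / (α ^ 2 * Real.exp 2) * (N + 3) ^ α = A ^ 2 := by
      rw [hN3, hαdef]
      field_simp
      ring
    calc ∑ x, q x * Real.log (q x) ^ 2
        ≤ 4 / (α ^ 2 * Real.exp 2) * ∑ x, q x ^ (1 - α) := hsum
      _ ≤ 4 / (α ^ 2 * Real.exp 2) * (N + 3) ^ α := by
          apply mul_le_mul_of_nonneg_left (hhold.trans hNbound) (by positivity)
      _ = A ^ 2 := hfinal
      _ ≤ A ^ 2 / Real.log 2 := by
          rw [le_div_iff₀ (by linarith)]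
          nlinarith
  · -- A < 2 : card is small
    push_neg at hA2
    have hNe2 : N + 3 < Real.exp 2 := by
      have : Real.exp A < Real.exp 2 := Real.exp_lt_exp.mpr hA2
      rwa [hAdef, Real.exp_log (by linarith)] at this
    have key : ∀ x, q x * Real.log (q x) ^ 2 ≤ 4 / Real.exp 2 := by
      intro x
      have := aux_y (q x) 1 (h0 x) (hq1 x) one_pos
      rw [Real.rpow_one] at this
      calc q x * Real.log (q x) ^ 2 ≤ 4 / (1 ^ 2 * Real.exp 2) := this
        _ = 4 / Real.exp 2 := by norm_num
    have hsum : ∑ x, q x * Real.log (q x) ^ 2 ≤ N * (4 / Real.exp 2) := by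
      calc ∑ x, q x * Real.log (q x) ^ 2 ≤ ∑ _x : X, 4 / Real.exp 2 :=
            Finset.sum_le_sum fun x _ => key x
        _ = N * (4 / Real.exp 2) := by
            rw [Finset.sum_const, Finset.card_univ, nsmul_eq_mul]
    -- N * 4 / e^2 ≤ (4-12/e^2) ≤ 4 log 2 ≤ A^2 / log 2
    have hexp1 : Real.exp 1 < 2.7182818286 := Real.exp_one_lt_d9
    have hexp1' : 0 < Real.exp 1 := Real.exp_pos 1
    have he2 : Real.exp 2 = Real.exp 1 * Real.exp 1 := by
      rw [← Real.exp_add]; norm_num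
    have he2lt : Real.exp 2 < 7.3890561 := by
      rw [he2]
      calc Real.exp 1 * Real.exp 1 < 2.7182818286 * 2.7182818286 :=
            mul_lt_mul hexp1 (le_of_lt hexp1) hexp1' (by norm_num)
        _ < 7.3890561 := by norm_num
    have hprod : Real.exp 2 * (1 - Real.log 2) ≤ 7.3890561 * 0.3068528197 :=
      mul_le_mul (le_of_lt he2lt) (by linarith) (by linarith) (by norm_num)
    have hkey : Real.exp 2 * (1 - Real.log 2) ≤ 3 := by
      refine hprod.trans ?_
      norm_num
    have hstep : N * (4 / Real.exp 2) ≤ 4 * Real.log 2 := by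
      rw [mul_comm, div_mul_eq_mul_div, div_le_iff₀ hexp2]
      nlinarith [hNe2, hkey, hexp2]
    have hA2' : 4 * Real.log 2 ≤ A ^ 2 / Real.log 2 := by
      rw [le_div_iff₀ (by linarith)]
      nlinarith [hA4]
    linarith [hsum, hstep, hA2']

/-- Smooth min-entropy of i.i.d. sequences (Holenstein–Renner): for i.i.d. pairs
`(X_i, Z_i)` with joint pmf `p` and any `δ > 0`, there is a nonnegative function
`rdist` within variational distance `ε = 2^{−Lδ²/(2 log²(|X|+3))}` of the product
distribution, witnessing `H_∞^ε(p_{X^L Z^L}|p_{Z^L}) ≥ L·H(X|Z) − Lδ`, i.e.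
`rdist x z ≤ p_{Z^L}(z) · 2^{−(L·H(X|Z) − Lδ)}` on the support of `p_{Z^L}`. -/
theorem smooth_min_entropy_iid {X Z : Type*} [Fintype X] [Fintype Z]
    (p : X × Z → ℝ) (hp0 : ∀ w, 0 ≤ p w) (hp1 : ∑ w, p w = 1)
    (L : ℕ) (hL : 0 < L) (δ : ℝ) (hδ : 0 < δ) :
    ∃ rdist : (Fin L → X) → (Fin L → Z) → ℝ,
      (∀ x z, 0 ≤ rdist x z) ∧
      (∑ x : Fin L → X, ∑ z : Fin L → Z, |(∏ i, p (x i, z i)) - rdist x z|)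
        ≤ (2 : ℝ) ^ (-((L : ℝ) * δ ^ 2 /
            (2 * (Real.logb 2 ((Fintype.card X : ℝ) + 3)) ^ 2))) ∧
      (∀ z : Fin L → Z, 0 < (∑ x : Fin L → X, ∏ i, p (x i, z i)) →
        ∀ x : Fin L → X,
          rdist x z ≤ (∑ x' : Fin L → X, ∏ i, p (x' i, z i)) *
            (2 : ℝ) ^ (-((L : ℝ) *
              ((-∑ w : X × Z, p w * Real.logb 2 (p w))
                - (-∑ z' : Z, (∑ x' : X, p (x', z')) *
                    Real.logb 2 (∑ x' : X, p (x', z'))))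
              - (L : ℝ) * δ))) := by
  classical
  have hlog2 : (0:ℝ) < Real.log 2 := Real.log_pos (by norm_num)
  have hlog2ne : Real.log 2 ≠ 0 := ne_of_gt hlog2
  have hXne : Nonempty X := by
    by_contra h
    rw [not_nonempty_iff] at h
    have : IsEmpty (X × Z) := by infer_instance
    rw [Finset.univ_eq_empty, Finset.sum_empty] at hp1
    norm_num at hp1
  have hn1 : (1:ℝ) ≤ (Fintype.card X : ℝ) := by
    exact_mod_cast Fintype.card_pos
  set n : ℝ := (Fintype.card X : ℝ) with hndef
  set A : ℝ := Real.log (n + 3) with hAdef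
  have hA0 : 0 < A := Real.log_pos (by linarith)
  have hAne : A ≠ 0 := ne_of_gt hA0
  set c : ℝ := A ^ 2 / Real.log 2 with hcdef
  have hc0 : 0 < c := by positivity
  set t : ℝ := Real.log 2 * δ / c with htdef
  have ht0 : 0 < t := by positivity
  set pz : Z → ℝ := fun z => ∑ x : X, p (x, z) with hpzdef
  have hpz0 : ∀ z, 0 ≤ pz z := fun z => Finset.sum_nonneg fun x _ => hp0 _
  have hple : ∀ w : X × Z, p w ≤ pz w.2 := by
    intro w
    have : p (w.1, w.2) ≤ ∑ x : X, p (x, w.2) :=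
      Finset.single_le_sum (f := fun x => p (x, w.2)) (fun i _ => hp0 _) (Finset.mem_univ w.1)
    simpa using this
  have hpzsum : ∑ z, pz z = 1 := by
    rw [← hp1, Fintype.sum_prod_type_right]
  set Hc : ℝ := (-∑ w : X × Z, p w * Real.logb 2 (p w))
      - (-∑ z' : Z, (pz z') * Real.logb 2 (pz z')) with hHcdef
  set V : X × Z → ℝ := fun w => Real.log (p w / pz w.2) with hVdef
  set g : X × Z → ℝ :=
    fun w => if p w = 0 then 0 else p w ^ ((1:ℝ) + t) / pz w.2 ^ t with hgdef
  have hg0 : ∀ w, 0 ≤ g w := by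
    intro w
    rw [hgdef]
    dsimp only
    split_ifs
    · exact le_rfl
    · exact div_nonneg (Real.rpow_nonneg (hp0 w) _) (Real.rpow_nonneg (hpz0 _) _)
  -- pointwise exponential-moment bound
  have hterm : ∀ w, g w ≤ p w * (1 + t * V w + t ^ 2 * V w ^ 2 / 2) := by
    intro w
    by_cases hw : p w = 0
    · rw [hgdef]
      dsimp only
      rw [if_pos hw, hw]
      ring_nf
      exact le_rfl
    · have hpw : 0 < p w := lt_of_le_of_ne (hp0 w) (Ne.symm hw)
      have hpzw : 0 < pz w.2 := lt_of_lt_of_le hpw (hple w)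
      have hgw : g w = p w * Real.exp (t * V w) := by
        rw [hgdef]
        dsimp only
        rw [if_neg hw, Real.rpow_add hpw, Real.rpow_one,
          Real.rpow_def_of_pos hpw, Real.rpow_def_of_pos hpzw, hVdef]
        dsimp only
        rw [Real.log_div (ne_of_gt hpw) (ne_of_gt hpzw), mul_div_assoc,
          ← Real.exp_sub]
        ring_nf
      rw [hgw]
      have hV0 : V w ≤ 0 := by
        rw [hVdef]
        exact Real.log_nonpos (by positivity) ((div_le_one hpzw).mpr (hple w))
      have hq := aux_exp_quad (t * V w) (by nlinarith)
      have : Real.exp (t * V w) ≤ 1 + t * V w + t ^ 2 * V w ^ 2 / 2 := by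
        calc Real.exp (t * V w) ≤ 1 + t * V w + (t * V w) ^ 2 / 2 := hq
          _ = 1 + t * V w + t ^ 2 * V w ^ 2 / 2 := by ring
      exact mul_le_mul_of_nonneg_left this (hp0 w)
  -- first moment identity
  set S1 : ℝ := ∑ w : X × Z, p w * Real.log (p w) - ∑ z, pz z * Real.log (pz z)
    with hS1def
  have hS1 : Real.log 2 * Hc = -S1 := by
    rw [hHcdef, hS1def]
    have e1 : ∑ w : X × Z, p w * Real.logb 2 (p w)
        = (∑ w : X × Z, p w * Real.log (p w)) / Real.log 2 := by
      rw [Finset.sum_div]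
      exact Finset.sum_congr rfl fun w _ => by rw [← Real.log_div_log]; ring
    have e2 : ∑ z' : Z, pz z' * Real.logb 2 (pz z')
        = (∑ z' : Z, pz z' * Real.log (pz z')) / Real.log 2 := by
      rw [Finset.sum_div]
      exact Finset.sum_congr rfl fun z' _ => by rw [← Real.log_div_log]; ring
    rw [e1, e2]
    field_simp
    ring
  have hM1 : ∑ w : X × Z, p w * V w = S1 := by
    have e1 : ∀ w : X × Z, p w * V w = p w * Real.log (p w) - p w * Real.log (pz w.2) := by
      intro w
      by_cases hw : p w = 0
      · rw [hw]; ring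
      · have hpw : 0 < p w := lt_of_le_of_ne (hp0 w) (Ne.symm hw)
        have hpzw : 0 < pz w.2 := lt_of_lt_of_le hpw (hple w)
        rw [hVdef]
        dsimp only
        rw [Real.log_div (ne_of_gt hpw) (ne_of_gt hpzw)]
        ring
    rw [Finset.sum_congr rfl fun w _ => e1 w, Finset.sum_sub_distrib, hS1def]
    congr 1
    rw [Fintype.sum_prod_type_right]
    refine Finset.sum_congr rfl fun z _ => ?_
    have : ∑ x : X, p (x, z) * Real.log (pz z) = pz z * Real.log (pz z) := by
      rw [← Finset.sum_mul]
    exact this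
  -- second moment bound
  have hM2 : ∑ w : X × Z, p w * V w ^ 2 ≤ c := by
    rw [Fintype.sum_prod_type_right]
    have perz : ∀ z : Z, ∑ x : X, p (x, z) * V (x, z) ^ 2 ≤ pz z * c := by
      intro z
      by_cases hz : pz z = 0
      · have hall : ∀ x : X, p (x, z) = 0 := by
          intro x
          have h1 : p (x, z) ≤ pz z := hple (x, z)
          have h2 : 0 ≤ p (x, z) := hp0 _
          linarith [hz ▸ h1]
        rw [hz, zero_mul]
        apply le_of_eq
        apply Finset.sum_eq_zero
        intro x _
        rw [hall x, zero_mul]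
      · have hz0 : 0 < pz z := lt_of_le_of_ne (hpz0 z) (Ne.symm hz)
        set q : X → ℝ := fun x => p (x, z) / pz z with hqdef
        have hq0 : ∀ x, 0 ≤ q x := fun x => div_nonneg (hp0 _) (hpz0 z)
        have hq1 : ∑ x, q x = 1 := by
          rw [hqdef]
          dsimp only
          rw [← Finset.sum_div]
          rw [hpzdef]
          dsimp only
          exact div_self hz
        have hmom := aux_entmoment q hq0 hq1
        have heq : ∀ x : X, p (x, z) * V (x, z) ^ 2 = pz z * (q x * Real.log (q x) ^ 2) := by
          intro x
          have hpq : p (x, z) = pz z * q x := by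
            rw [hqdef]
            dsimp only
            field_simp
          have hVq : V (x, z) = Real.log (q x) := by
            rw [hVdef, hqdef]
          rw [hVq]
          nth_rewrite 1 [hpq]
          ring
        rw [Finset.sum_congr rfl fun x _ => heq x, ← Finset.mul_sum]
        apply mul_le_mul_of_nonneg_left _ (hpz0 z)
        rw [hcdef]
        exact hmom
    calc ∑ z : Z, ∑ x : X, p (x, z) * V (x, z) ^ 2 ≤ ∑ z : Z, pz z * c :=
          Finset.sum_le_sum fun z _ => perz z
      _ = c := by rw [← Finset.sum_mul, hpzsum, one_mul]
  -- per-letter sum bound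
  set E : ℝ := t * S1 + t ^ 2 * c / 2 with hEdef
  have hgsum : ∑ w : X × Z, g w ≤ Real.exp E := by
    have h1 : ∑ w : X × Z, g w
        ≤ ∑ w : X × Z, p w * (1 + t * V w + t ^ 2 * V w ^ 2 / 2) :=
      Finset.sum_le_sum fun w _ => hterm w
    have h2 : ∑ w : X × Z, p w * (1 + t * V w + t ^ 2 * V w ^ 2 / 2)
        = (∑ w : X × Z, p w) + t * (∑ w : X × Z, p w * V w)
          + t ^ 2 / 2 * (∑ w : X × Z, p w * V w ^ 2) := by
      rw [Finset.mul_sum, Finset.mul_sum, ← Finset.sum_add_distrib,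
        ← Finset.sum_add_distrib]
      exact Finset.sum_congr rfl fun w _ => by ring
    have h3 : (∑ w : X × Z, p w) + t * (∑ w : X × Z, p w * V w)
          + t ^ 2 / 2 * (∑ w : X × Z, p w * V w ^ 2) ≤ 1 + E := by
      rw [hp1, hM1, hEdef]
      nlinarith [hM2, sq_nonneg t]
    have h4 : 1 + E ≤ Real.exp E := by
      have := Real.add_one_le_exp E
      linarith
    exact le_trans h1 (le_trans (le_of_eq h2) (le_trans h3 h4))
  -- tensorization
  have hPZprod : ∀ z : Fin L → Z,
      (∑ x : Fin L → X, ∏ i, p (x i, z i)) = ∏ i, pz (z i) := by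
    intro z
    have h := Finset.prod_univ_sum (fun _ : Fin L => (univ : Finset X))
      (fun i xx => p (xx, z i))
    rw [Fintype.piFinset_univ] at h
    exact h.symm
  have hgprod : ∑ x : Fin L → X, ∑ z : Fin L → Z, ∏ i, g (x i, z i)
      = (∑ w : X × Z, g w) ^ L := by
    have h1 : (∑ w : X × Z, g w) ^ L = ∏ _i : Fin L, ∑ w : X × Z, g w := by
      rw [Finset.prod_const, Finset.card_univ, Fintype.card_fin]
    have h2 := Finset.prod_univ_sum (fun _ : Fin L => (univ : Finset (X × Z)))
      (fun _ w => g w)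
    rw [Fintype.piFinset_univ] at h2
    rw [h1, h2]
    rw [← Equiv.sum_comp (Equiv.arrowProdEquivProdArrow (Fin L) (fun _ => X) (fun _ => Z)).symm
      (fun f : Fin L → X × Z => ∏ i, g (f i))]
    rw [Fintype.sum_prod_type]
    refine Finset.sum_congr rfl fun x _ => ?_
    refine Finset.sum_congr rfl fun z _ => ?_
    refine Finset.prod_congr rfl fun i _ => ?_
    simp [Equiv.arrowProdEquivProdArrow]
  set b : ℝ := (L:ℝ) * Hc - (L:ℝ) * δ with hbdef
  set K : ℝ := (2:ℝ) ^ (b * t) with hKdef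
  have hK0 : 0 < K := Real.rpow_pos_of_pos (by norm_num) _
  have hBnn : ∀ z : Fin L → Z,
      0 ≤ (∑ x' : Fin L → X, ∏ i, p (x' i, z i)) * (2:ℝ) ^ (-b) :=
    fun z => mul_nonneg
      (Finset.sum_nonneg fun x _ => Finset.prod_nonneg fun i _ => hp0 _)
      (Real.rpow_nonneg (by norm_num) _)
  have hpoint : ∀ (x : Fin L → X) (z : Fin L → Z),
      |(∏ i, p (x i, z i)) - min (∏ i, p (x i, z i))
          ((∑ x' : Fin L → X, ∏ i, p (x' i, z i)) * (2:ℝ) ^ (-b))|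
        ≤ K * ∏ i, g (x i, z i) := by
    intro x z
    set Q : ℝ := ∏ i, p (x i, z i) with hQdef
    set B : ℝ := (∑ x' : Fin L → X, ∏ i, p (x' i, z i)) * (2:ℝ) ^ (-b) with hBdef
    have hQ0 : 0 ≤ Q := Finset.prod_nonneg fun i _ => hp0 _
    have habs : |Q - min Q B| = Q - min Q B := abs_of_nonneg (by
      have := min_le_left Q B
      linarith)
    rw [habs]
    have hgp : 0 ≤ ∏ i, g (x i, z i) := Finset.prod_nonneg fun i _ => hg0 _
    rcases le_or_gt Q B with hQB | hBQ
    · rw [min_eq_left hQB]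
      simp only [sub_self]
      exact mul_nonneg hK0.le hgp
    · rw [min_eq_right hBQ.le]
      have hQpos : 0 < Q := lt_of_le_of_lt (hBnn z) hBQ
      have hfac : ∀ i : Fin L, 0 < p (x i, z i) := by
        intro i
        rcases eq_or_lt_of_le (hp0 (x i, z i)) with h | h
        · exfalso
          have hQz : Q = 0 := by
            rw [hQdef]
            exact Finset.prod_eq_zero (Finset.mem_univ i) h.symm
          linarith
        · exact h
      have hpzfac : ∀ i : Fin L, 0 < pz (z i) :=
        fun i => lt_of_lt_of_le (hfac i) (hple (x i, z i))
      have hPZpos : 0 < ∏ i, pz (z i) := Finset.prod_pos fun i _ => hpzfac i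
      have hgp2 : ∏ i, g (x i, z i) = Q * (Q / ∏ i, pz (z i)) ^ t := by
        have e1 : ∀ i : Fin L, g (x i, z i)
            = p (x i, z i) ^ ((1:ℝ) + t) / pz (z i) ^ t := by
          intro i
          rw [hgdef]
          dsimp only
          rw [if_neg (ne_of_gt (hfac i))]
        rw [Finset.prod_congr rfl fun i _ => e1 i, Finset.prod_div_distrib,
          Real.finset_prod_rpow _ _ (fun i _ => hp0 _) _,
          Real.finset_prod_rpow _ _ (fun i _ => (hpzfac i).le) _]
        rw [← hQdef, Real.rpow_add hQpos, Real.rpow_one,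
          Real.div_rpow hQ0 hPZpos.le]
        ring
      rw [hgp2]
      have hratio : (2:ℝ) ^ (-b) ≤ Q / ∏ i, pz (z i) := by
        rw [le_div_iff₀ hPZpos]
        calc (2:ℝ) ^ (-b) * ∏ i, pz (z i) = B := by
              rw [hBdef, hPZprod z]
              ring
          _ ≤ Q := hBQ.le
      have h1K : (1:ℝ) ≤ K * (Q / ∏ i, pz (z i)) ^ t := by
        have h2 : ((2:ℝ) ^ (-b)) ^ t ≤ (Q / ∏ i, pz (z i)) ^ t :=
          Real.rpow_le_rpow (Real.rpow_nonneg (by norm_num) _) hratio ht0.le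
        have h3 : K * ((2:ℝ) ^ (-b)) ^ t = 1 := by
          rw [hKdef, ← Real.rpow_mul (by norm_num : (0:ℝ) ≤ 2),
            ← Real.rpow_add (by norm_num : (0:ℝ) < 2),
            show b * t + -b * t = 0 by ring, Real.rpow_zero]
        calc (1:ℝ) = K * ((2:ℝ) ^ (-b)) ^ t := h3.symm
          _ ≤ K * (Q / ∏ i, pz (z i)) ^ t :=
              mul_le_mul_of_nonneg_left h2 hK0.le
      calc Q - B ≤ Q := by linarith [hBnn z]
        _ = Q * 1 := (mul_one Q).symm
        _ ≤ Q * (K * (Q / ∏ i, pz (z i)) ^ t) :=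
            mul_le_mul_of_nonneg_left h1K hQ0
        _ = K * (Q * (Q / ∏ i, pz (z i)) ^ t) := by ring
  refine ⟨fun x z => min (∏ i, p (x i, z i))
      ((∑ x' : Fin L → X, ∏ i, p (x' i, z i)) * (2:ℝ) ^ (-b)), ?_, ?_, ?_⟩
  · intro x z
    exact le_min (Finset.prod_nonneg fun i _ => hp0 _) (hBnn z)
  · calc ∑ x : Fin L → X, ∑ z : Fin L → Z,
        |(∏ i, p (x i, z i)) - min (∏ i, p (x i, z i))
          ((∑ x' : Fin L → X, ∏ i, p (x' i, z i)) * (2:ℝ) ^ (-b))|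
        ≤ ∑ x : Fin L → X, ∑ z : Fin L → Z, K * ∏ i, g (x i, z i) :=
          Finset.sum_le_sum fun x _ => Finset.sum_le_sum fun z _ => hpoint x z
      _ = K * ((∑ w : X × Z, g w) ^ L) := by
          simp_rw [← Finset.mul_sum]
          rw [hgprod]
      _ ≤ K * (Real.exp E) ^ L := by
          apply mul_le_mul_of_nonneg_left _ hK0.le
          exact pow_le_pow_left₀ (Finset.sum_nonneg fun w _ => hg0 w) hgsum L
      _ ≤ (2:ℝ) ^ (-((L:ℝ) * δ ^ 2 / (2 * Real.logb 2 (n + 3) ^ 2))) := by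
          apply le_of_eq
          rw [← Real.exp_nat_mul, hKdef,
            Real.rpow_def_of_pos (by norm_num : (0:ℝ) < 2),
            ← Real.exp_add,
            Real.rpow_def_of_pos (by norm_num : (0:ℝ) < 2)]
          congr 1
          have hlogb : Real.logb 2 (n + 3) = A / Real.log 2 := by
            rw [Real.logb, hAdef]
          have hS1' : S1 = -(Real.log 2 * Hc) := by linarith [hS1]
          rw [hlogb, hEdef, hbdef, htdef, hcdef, hS1']
          field_simp
          ring
  · intro z _ x
    exact min_le_right _ _
end

section
/- Entropy continuity under variational distance (finite alphabets): if p and q are pmfs on a finite set X of size m ≥ 4 with V(p,q) ≤ μ ≤ 1/2, then |H(p) − H(q)| ≤ μ log(m/μ). Consequently, for conditional entropies of jointly distributed pairs: if V(p_{XY}, q_{XY}) ≤ μ ≤ 1/2 on X × Y, then |H_p(X|Y) − H_q(X|Y)| ≤ 2μ log(|X||Y|/μ). -/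
open Finset
open Real


lemma nml_subadd {x d : ℝ} (hx : 0 ≤ x) (hd : 0 ≤ d) :
    negMulLog (x + d) ≤ negMulLog x + negMulLog d := by
  rcases eq_or_lt_of_le hx with hx0 | hx
  · simp [← hx0]
  rcases eq_or_lt_of_le hd with hd0 | hd
  · simp [← hd0]
  have h1 : Real.log x ≤ Real.log (x + d) := Real.log_le_log hx (by linarith)
  have h2 : Real.log d ≤ Real.log (x + d) := Real.log_le_log hd (by linarith)
  simp only [negMulLog, neg_mul]
  nlinarith

lemma concave_pair {f : ℝ → ℝ} {s : Set ℝ} (hf : ConcaveOn ℝ s f) {a b t : ℝ}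
    (ha : a ∈ s) (hb : b ∈ s) (ht0 : 0 ≤ t) (ht1 : t ≤ 1) :
    f a + f b ≤ f (t * a + (1 - t) * b) + f ((1 - t) * a + t * b) := by
  have h1 := hf.2 ha hb ht0 (show (0:ℝ) ≤ 1 - t by linarith)
    (show t + (1 - t) = 1 by ring)
  have h2 := hf.2 ha hb (show (0:ℝ) ≤ 1 - t by linarith) ht0
    (show (1 - t) + t = 1 by ring)
  simp only [smul_eq_mul] at h1 h2
  linarith


lemma nml_one_sub_le {d : ℝ} (hd0 : 0 ≤ d) (hd : d ≤ 1/2) :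
    negMulLog (1 - d) ≤ negMulLog d := by
  set h : ℝ → ℝ := fun x => negMulLog x - negMulLog (1 - x) with hh
  suffices hs : 0 ≤ h d by simpa [hh] using hs
  have hderiv : ∀ x ∈ Set.Ioo (0:ℝ) (1/2),
      HasDerivAt h (-Real.log x - Real.log (1 - x) - 2) x := by
    intro x hx
    have hx1 : (1:ℝ) - x ≠ 0 := by
      have := hx.2; intro hc; rw [sub_eq_zero] at hc; rw [← hc] at this; norm_num at this
    have h1 : HasDerivAt negMulLog (-Real.log x - 1) x :=
      hasDerivAt_negMulLog (ne_of_gt hx.1)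
    have hlin : HasDerivAt (fun x : ℝ => 1 - x) (-1) x := (hasDerivAt_id x).const_sub 1
    have h2 : HasDerivAt (fun x : ℝ => negMulLog (1 - x))
        ((-Real.log (1 - x) - 1) * (-1)) x :=
      (hasDerivAt_negMulLog hx1).comp x hlin
    have := h1.sub h2
    exact this.congr_deriv (by ring)
  have hconc : ConcaveOn ℝ (Set.Icc (0:ℝ) (1/2)) h := by
    apply concaveOn_of_deriv2_nonpos (convex_Icc _ _)
    · exact (continuous_negMulLog.sub
        (continuous_negMulLog.comp (continuous_const.sub continuous_id))).continuousOn
    · intro x hx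
      rw [interior_Icc] at hx
      exact ((hderiv x hx).differentiableAt).differentiableWithinAt
    · intro x hx
      rw [interior_Icc] at hx
      have heq : Set.EqOn (deriv h) (fun x => -Real.log x - Real.log (1 - x) - 2)
          (Set.Ioo (0:ℝ) (1/2)) := fun y hy => (hderiv y hy).deriv
      have hg : HasDerivAt (fun x : ℝ => -Real.log x - Real.log (1 - x) - 2)
          (-x⁻¹ - (1 - x)⁻¹ * (-1)) x := by
        have hx1 : (1:ℝ) - x ≠ 0 := by
          have := hx.2; intro hc; rw [sub_eq_zero] at hc; rw [← hc] at this; norm_num at this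
        have hl1 : HasDerivAt Real.log x⁻¹ x := Real.hasDerivAt_log (ne_of_gt hx.1)
        have hlin : HasDerivAt (fun x : ℝ => 1 - x) (-1) x := (hasDerivAt_id x).const_sub 1
        have hl2 : HasDerivAt (fun x : ℝ => Real.log (1 - x)) ((1 - x)⁻¹ * (-1)) x :=
          (Real.hasDerivAt_log hx1).comp x hlin
        exact (hl1.neg.sub hl2).sub_const 2
      have hgd : HasDerivAt (deriv h) (-x⁻¹ - (1 - x)⁻¹ * (-1)) x := by
        apply hg.congr_of_eventuallyEq
        exact Filter.eventuallyEq_of_mem (isOpen_Ioo.mem_nhds hx) heq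
      exact hgd.differentiableAt.differentiableWithinAt
    · intro x hx
      rw [interior_Icc] at hx
      have heq : Set.EqOn (deriv h) (fun x => -Real.log x - Real.log (1 - x) - 2)
          (Set.Ioo (0:ℝ) (1/2)) := fun y hy => (hderiv y hy).deriv
      have hg : HasDerivAt (fun x : ℝ => -Real.log x - Real.log (1 - x) - 2)
          (-x⁻¹ - (1 - x)⁻¹ * (-1)) x := by
        have hx1 : (1:ℝ) - x ≠ 0 := by
          have := hx.2; intro hc; rw [sub_eq_zero] at hc; rw [← hc] at this; norm_num at this
        have hl1 : HasDerivAt Real.log x⁻¹ x := Real.hasDerivAt_log (ne_of_gt hx.1)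
        have hlin : HasDerivAt (fun x : ℝ => 1 - x) (-1) x := (hasDerivAt_id x).const_sub 1
        have hl2 : HasDerivAt (fun x : ℝ => Real.log (1 - x)) ((1 - x)⁻¹ * (-1)) x :=
          (Real.hasDerivAt_log hx1).comp x hlin
        exact (hl1.neg.sub hl2).sub_const 2
      have hgd : HasDerivAt (deriv h) (-x⁻¹ - (1 - x)⁻¹ * (-1)) x := by
        apply hg.congr_of_eventuallyEq
        exact Filter.eventuallyEq_of_mem (isOpen_Ioo.mem_nhds hx) heq
      show deriv (deriv h) x ≤ 0
      rw [hgd.deriv]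
      have hx0 : 0 < x := hx.1
      have hx2 : x < 1/2 := hx.2
      have h1x : 0 < 1 - x := by linarith
      have hle : (1-x)⁻¹ ≤ x⁻¹ := by
        apply inv_anti₀ hx0 (by linarith)
      nlinarith [inv_pos.mpr hx0, inv_pos.mpr h1x]
  -- h 0 = 0, h (1/2) = 0, concavity
  have h0 : h 0 = 0 := by simp [hh]
  have hhalf : h (1/2) = 0 := by norm_num [hh]
  rcases eq_or_lt_of_le hd0 with h' | hdpos
  · rw [← h', h0]
  have := hconc.2 (Set.mem_Icc.mpr ⟨by norm_num, le_refl _⟩)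
    (Set.mem_Icc.mpr ⟨le_refl _, by norm_num⟩)
    (show (0:ℝ) ≤ 2 * d by linarith)
    (show (0:ℝ) ≤ 1 - 2 * d by linarith)
    (by ring)
  simp only [smul_eq_mul, hhalf, h0, mul_zero, add_zero] at this
  calc (0:ℝ) = 2 * d * 0 + (1 - 2*d) * 0 := by ring
  _ ≤ h (2 * d * (1/2) + (1 - 2*d) * 0) := by
      simpa [hhalf, h0] using this
  _ = h d := by congr 1; ring


lemma nml_pointwise {x y : ℝ} (hx0 : 0 ≤ x) (hy0 : 0 ≤ y) (hy1 : y ≤ 1)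
    (hxy : x ≤ y) (hd : y - x ≤ 1/2) :
    |negMulLog x - negMulLog y| ≤ negMulLog (y - x) := by
  set d := y - x with hdd
  have hd0 : 0 ≤ d := by simp [hdd]; linarith
  rcases eq_or_lt_of_le hd0 with h0 | hdpos
  · have : y = x := by simp [hdd] at h0 ⊢; linarith
    simp [this, ← h0]
  have hx1 : x < 1 := by linarith
  have h1x : (0:ℝ) < 1 - x := by linarith
  set t := (1 - y) / (1 - x) with htt
  have ht0 : 0 ≤ t := div_nonneg (by linarith) h1x.le
  have ht1 : t ≤ 1 := by
    rw [div_le_one h1x]; linarith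
  have pair := concave_pair concaveOn_negMulLog (Set.mem_Ici.mpr hx0)
    (Set.mem_Ici.mpr (by norm_num : (0:ℝ) ≤ 1)) ht0 ht1
  have ht : t * (1 - x) = 1 - y := by rw [htt]; exact div_mul_cancel₀ _ h1x.ne'
  have e1 : t * x + (1 - t) * 1 = y := by
    linear_combination -ht
  have e2 : (1 - t) * x + t * 1 = 1 - d := by
    linear_combination ht + hdd
  rw [e1, e2, negMulLog_one, add_zero] at pair
  have lower : negMulLog x - negMulLog y ≤ negMulLog d := by
    have := nml_one_sub_le hd0 hd
    linarith
  have upper : negMulLog y - negMulLog x ≤ negMulLog d := by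
    have := nml_subadd hx0 hd0
    rw [show x + d = y by rw [hdd]; ring] at this
    linarith
  rw [abs_sub_le_iff]
  exact ⟨lower, upper⟩

lemma nml_sum_le {γ : Type*} [Fintype γ] (hM : 0 < Fintype.card γ) (d : γ → ℝ)
    (hd : ∀ a, 0 ≤ d a) :
    ∑ a, negMulLog (d a) ≤ (Fintype.card γ : ℝ) * negMulLog ((∑ a, d a) / Fintype.card γ) := by
  have hMpos : (0:ℝ) < Fintype.card γ := by exact_mod_cast hM
  have := concaveOn_negMulLog.le_map_sum (t := Finset.univ)
    (w := fun _ : γ => (Fintype.card γ : ℝ)⁻¹) (p := d)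
    (fun i _ => by positivity)
    (by simp [Finset.card_univ]; field_simp)
    (fun i _ => Set.mem_Ici.mpr (hd i))
  simp only [smul_eq_mul, ← Finset.mul_sum] at this
  rw [div_eq_inv_mul]
  calc ∑ a, negMulLog (d a) = (Fintype.card γ : ℝ) * ((Fintype.card γ : ℝ)⁻¹ * ∑ a, negMulLog (d a)) := by
        field_simp
  _ ≤ _ := by
        apply mul_le_mul_of_nonneg_left _ hMpos.le
        exact this

lemma mono_phi {M : ℝ} (hM : 2 ≤ M) :
    MonotoneOn (fun t => t * Real.log M + negMulLog t) (Set.Icc (0:ℝ) (1/2)) := by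
  apply monotoneOn_of_deriv_nonneg (convex_Icc _ _)
  · exact ((continuous_id.mul continuous_const).add continuous_negMulLog).continuousOn
  · intro x hx
    rw [interior_Icc] at hx
    exact (((hasDerivAt_id x).mul_const _).add
      (hasDerivAt_negMulLog (ne_of_gt hx.1))).differentiableAt.differentiableWithinAt
  · intro x hx
    rw [interior_Icc] at hx
    have hder : HasDerivAt (fun t : ℝ => t * Real.log M + negMulLog t)
        (1 * Real.log M + (-Real.log x - 1)) x :=
      ((hasDerivAt_id x).mul_const _).add (hasDerivAt_negMulLog (ne_of_gt hx.1))
    rw [hder.deriv]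
    have h1 : Real.log 2 ≤ Real.log M := Real.log_le_log (by norm_num) hM
    have h2 : Real.log x ≤ Real.log (1/2) := Real.log_le_log hx.1 hx.2.le
    have h3 : Real.log (1/2) = -Real.log 2 := by
      rw [one_div, Real.log_inv]
    have h4 : (0.6931471803 : ℝ) < Real.log 2 := Real.log_two_gt_d9
    linarith

/-- Shannon entropy (base 2) of a pmf on a finite set. -/
noncomputable def entropy {α : Type*} [Fintype α] (p : α → ℝ) : ℝ :=
  -∑ a, p a * Real.logb 2 (p a)

lemma entropy_eq {α : Type*} [Fintype α] (p : α → ℝ) :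
    entropy p = (∑ a, negMulLog (p a)) / Real.log 2 := by
  rw [entropy, Finset.sum_div, ← Finset.sum_neg_distrib]
  apply Finset.sum_congr rfl
  intro a _
  rw [negMulLog, Real.logb]
  ring

lemma key {γ : Type*} [Fintype γ] (p q : γ → ℝ)
    (hp0 : ∀ a, 0 ≤ p a) (hq0 : ∀ a, 0 ≤ q a)
    (hp1 : ∑ a, p a = 1) (hq1 : ∑ a, q a = 1)
    {μ : ℝ} (hμpos : 0 < μ) (hμ : μ ≤ 1/2)
    (hV : ∑ a, |p a - q a| ≤ μ) :
    |entropy p - entropy q| ≤ μ * Real.logb 2 ((Fintype.card γ : ℝ) / μ) := by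
  have hne : Nonempty γ := by
    by_contra h
    rw [not_nonempty_iff] at h
    rw [Finset.univ_eq_empty, Finset.sum_empty] at hp1
    norm_num at hp1
  have hcard : 0 < Fintype.card γ := Fintype.card_pos
  have hμne : μ ≠ 0 := ne_of_gt hμpos
  have hlog2 : (0:ℝ) < Real.log 2 := Real.log_pos (by norm_num)
  set M : ℝ := (Fintype.card γ : ℝ) with hMM
  have hM1 : (1:ℝ) ≤ M := by rw [hMM]; exact_mod_cast hcard
  have hMne : M ≠ 0 := by linarith
  -- reduce to natural-log inequality
  suffices hnat : |(∑ a, negMulLog (p a)) - ∑ a, negMulLog (q a)| ≤ μ * (Real.log M - Real.log μ) by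
    rw [entropy_eq, entropy_eq, div_sub_div_same, abs_div, abs_of_pos hlog2,
      Real.logb, Real.log_div hMne hμne, div_le_iff₀ hlog2]
    calc |(∑ a, negMulLog (p a)) - ∑ a, negMulLog (q a)| ≤ μ * (Real.log M - Real.log μ) := hnat
    _ = μ * ((Real.log M - Real.log μ) / Real.log 2) * Real.log 2 := by field_simp
  have hμlog : Real.log μ ≤ 0 := Real.log_nonpos hμpos.le (by linarith)
  rcases eq_or_lt_of_le hM1 with hM1' | hM2
  · -- card = 1
    have hcard1 : Fintype.card γ = 1 := by
      rw [hMM] at hM1'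
      exact_mod_cast hM1'.symm
    obtain ⟨x, hx⟩ := Fintype.card_eq_one_iff.mp hcard1
    have huniv : (Finset.univ : Finset γ) = {x} := by
      ext y; simp [hx y]
    have hp : p x = 1 := by rwa [huniv, Finset.sum_singleton] at hp1
    have hq : q x = 1 := by rwa [huniv, Finset.sum_singleton] at hq1
    rw [huniv, Finset.sum_singleton, Finset.sum_singleton, hp, hq, negMulLog_one,
      sub_zero, abs_zero]
    rw [← hM1']
    simp only [Real.log_one, zero_sub]
    nlinarith
  -- card ≥ 2
  have hM2' : (2:ℝ) ≤ M := by
    rw [hMM] at hM2 ⊢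
    have h1 : 1 < Fintype.card γ := by exact_mod_cast hM2
    exact_mod_cast h1
  set d : γ → ℝ := fun a => |p a - q a| with hdd
  have hd0 : ∀ a, 0 ≤ d a := fun a => abs_nonneg _
  set D : ℝ := ∑ a, d a with hDD
  have hD0 : 0 ≤ D := Finset.sum_nonneg fun a _ => hd0 a
  have hDμ : D ≤ μ := hV
  have hdle : ∀ a, d a ≤ 1/2 := fun a => by
    have h1 : d a ≤ D := Finset.single_le_sum (fun b _ => hd0 b) (Finset.mem_univ a)
    linarith
  have hple1 : ∀ a, p a ≤ 1 := fun a => by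
    have := Finset.single_le_sum (fun b _ => hp0 b) (Finset.mem_univ a)
    rw [hp1] at this; exact this
  have hqle1 : ∀ a, q a ≤ 1 := fun a => by
    have := Finset.single_le_sum (fun b _ => hq0 b) (Finset.mem_univ a)
    rw [hq1] at this; exact this
  have hpt : ∀ a, |negMulLog (p a) - negMulLog (q a)| ≤ negMulLog (d a) := by
    intro a
    rcases le_total (p a) (q a) with h | h
    · have := nml_pointwise (hp0 a) (hq0 a) (hqle1 a) h (by
        have := hdle a; rw [hdd] at this; simp only at this
        rw [abs_of_nonpos (by linarith)] at this; linarith)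
      rwa [show d a = q a - p a by rw [hdd]; simp only; rw [abs_of_nonpos (by linarith)]; ring]
    · have := nml_pointwise (hq0 a) (hp0 a) (hple1 a) h (by
        have := hdle a; rw [hdd] at this; simp only at this
        rw [abs_of_nonneg (by linarith)] at this; linarith)
      rw [show d a = p a - q a by rw [hdd]; simp only; rw [abs_of_nonneg (by linarith)]]
      rwa [abs_sub_comm]
  calc |(∑ a, negMulLog (p a)) - ∑ a, negMulLog (q a)|
      = |∑ a, (negMulLog (p a) - negMulLog (q a))| := by rw [Finset.sum_sub_distrib]
  _ ≤ ∑ a, |negMulLog (p a) - negMulLog (q a)| := Finset.abs_sum_le_sum_abs _ _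
  _ ≤ ∑ a, negMulLog (d a) := Finset.sum_le_sum fun a _ => hpt a
  _ ≤ M * negMulLog (D / M) := nml_sum_le hcard d hd0
  _ = D * Real.log M + negMulLog D := by
      rcases eq_or_lt_of_le hD0 with h0 | hDpos
      · rw [← h0]; simp
      · rw [negMulLog, negMulLog, Real.log_div (ne_of_gt hDpos) hMne]
        field_simp
        ring
  _ ≤ μ * Real.log M + negMulLog μ := by
      have := mono_phi hM2' (Set.mem_Icc.mpr ⟨hD0, by linarith⟩)
        (Set.mem_Icc.mpr ⟨hμpos.le, hμ⟩) hDμ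
      simpa using this
  _ = μ * (Real.log M - Real.log μ) := by rw [negMulLog]; ring

/-- Continuity of entropy under variational distance: if `V(p,q) ≤ μ ≤ 1/2` on an
alphabet of size `m ≥ 4`, then `|H(p) − H(q)| ≤ μ log(m/μ)`; and for joint pmfs
`p_{XY}, q_{XY}` with `V ≤ μ ≤ 1/2`,
`|H_p(X|Y) − H_q(X|Y)| ≤ 2μ log(|X||Y|/μ)`. -/
theorem entropy_continuity {α α' β : Type*} [Fintype α] [Fintype α'] [Fintype β]
    (hm : 4 ≤ Fintype.card α)
    (p q : α → ℝ)
    (hp0 : ∀ a, 0 ≤ p a) (hq0 : ∀ a, 0 ≤ q a)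
    (hp1 : ∑ a, p a = 1) (hq1 : ∑ a, q a = 1)
    (μ : ℝ) (hμ : μ ≤ 1 / 2)
    (hV : ∑ a, |p a - q a| ≤ μ)
    (pXY qXY : α' × β → ℝ)
    (hpXY0 : ∀ w, 0 ≤ pXY w) (hqXY0 : ∀ w, 0 ≤ qXY w)
    (hpXY1 : ∑ w, pXY w = 1) (hqXY1 : ∑ w, qXY w = 1)
    (hV2 : ∑ w, |pXY w - qXY w| ≤ μ) :
    |entropy p - entropy q| ≤ μ * Real.logb 2 ((Fintype.card α : ℝ) / μ) ∧
    |(entropy pXY - entropy (fun y : β => ∑ x, pXY (x, y)))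
        - (entropy qXY - entropy (fun y : β => ∑ x, qXY (x, y)))|
      ≤ 2 * μ * Real.logb 2 (((Fintype.card α' : ℝ) * Fintype.card β) / μ) := by
  have hμ0 : 0 ≤ μ := le_trans (Finset.sum_nonneg fun a _ => abs_nonneg _) hV
  rcases eq_or_lt_of_le hμ0 with hμz | hμpos
  · -- μ = 0 : p = q, pXY = qXY
    have hpq : p = q := by
      funext a
      have h1 : |p a - q a| ≤ 0 := by
        have := Finset.single_le_sum (f := fun a => |p a - q a|)
          (fun b _ => abs_nonneg _) (Finset.mem_univ a)
        rw [← hμz] at hV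
        exact this.trans hV
      have := abs_nonneg (p a - q a)
      have : |p a - q a| = 0 := le_antisymm h1 this
      rw [abs_eq_zero, sub_eq_zero] at this
      exact this
    have hpqXY : pXY = qXY := by
      funext w
      have h1 : |pXY w - qXY w| ≤ 0 := by
        have := Finset.single_le_sum (f := fun w => |pXY w - qXY w|)
          (fun b _ => abs_nonneg _) (Finset.mem_univ w)
        rw [← hμz] at hV2
        exact this.trans hV2
      have h2 := abs_nonneg (pXY w - qXY w)
      have : |pXY w - qXY w| = 0 := le_antisymm h1 h2
      rw [abs_eq_zero, sub_eq_zero] at this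
      exact this
    subst hpq hpqXY
    rw [← hμz]
    norm_num
  -- μ > 0
  have hneprod : Nonempty (α' × β) := by
    by_contra h
    rw [not_nonempty_iff] at h
    rw [Finset.univ_eq_empty, Finset.sum_empty] at hpXY1
    norm_num at hpXY1
  have hneα' : Nonempty α' := ⟨hneprod.some.1⟩
  have hneβ : Nonempty β := ⟨hneprod.some.2⟩
  have hcα' : 1 ≤ Fintype.card α' := Fintype.card_pos
  have hcβ : 1 ≤ Fintype.card β := Fintype.card_pos
  constructor
  · exact key p q hp0 hq0 hp1 hq1 hμpos hμ hV
  -- conditional part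
  have h1 := key pXY qXY hpXY0 hqXY0 hpXY1 hqXY1 hμpos hμ hV2
  set pY : β → ℝ := fun y => ∑ x, pXY (x, y) with hpY
  set qY : β → ℝ := fun y => ∑ x, qXY (x, y) with hqY
  have hpY0 : ∀ y, 0 ≤ pY y := fun y => Finset.sum_nonneg fun x _ => hpXY0 _
  have hqY0 : ∀ y, 0 ≤ qY y := fun y => Finset.sum_nonneg fun x _ => hqXY0 _
  have hpY1 : ∑ y, pY y = 1 := by
    rw [← hpXY1, Fintype.sum_prod_type]
    exact Finset.sum_comm.symm
  have hqY1 : ∑ y, qY y = 1 := by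
    rw [← hqXY1, Fintype.sum_prod_type]
    exact Finset.sum_comm.symm
  have hVY : ∑ y, |pY y - qY y| ≤ μ := by
    calc ∑ y, |pY y - qY y| = ∑ y, |∑ x, (pXY (x, y) - qXY (x, y))| := by
          apply Finset.sum_congr rfl
          intro y _
          rw [hpY, hqY]
          simp only
          rw [Finset.sum_sub_distrib]
    _ ≤ ∑ y, ∑ x, |pXY (x, y) - qXY (x, y)| :=
          Finset.sum_le_sum fun y _ => Finset.abs_sum_le_sum_abs _ _
    _ = ∑ w : α' × β, |pXY w - qXY w| := by
          rw [Fintype.sum_prod_type]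
          exact Finset.sum_comm
    _ ≤ μ := hV2
  have h2 := key pY qY hpY0 hqY0 hpY1 hqY1 hμpos hμ hVY
  have hcardprod : (Fintype.card (α' × β) : ℝ) = (Fintype.card α' : ℝ) * Fintype.card β := by
    rw [Fintype.card_prod]; push_cast; ring
  rw [hcardprod] at h1
  -- logb monotonicity for the marginal bound
  have hlogle : Real.logb 2 ((Fintype.card β : ℝ) / μ)
      ≤ Real.logb 2 (((Fintype.card α' : ℝ) * Fintype.card β) / μ) := by
    apply Real.logb_le_logb_of_le (by norm_num)
    · positivity
    · rw [div_le_div_iff_of_pos_right hμpos]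
      calc (Fintype.card β : ℝ) = 1 * Fintype.card β := (one_mul _).symm
      _ ≤ (Fintype.card α' : ℝ) * Fintype.card β := by
          apply mul_le_mul_of_nonneg_right _ (by positivity)
          exact_mod_cast hcα'
  calc |(entropy pXY - entropy pY) - (entropy qXY - entropy qY)|
      = |(entropy pXY - entropy qXY) - (entropy pY - entropy qY)| := by ring_nf
  _ ≤ |entropy pXY - entropy qXY| + |entropy pY - entropy qY| := abs_sub _ _
  _ ≤ μ * Real.logb 2 (((Fintype.card α' : ℝ) * Fintype.card β) / μ)
      + μ * Real.logb 2 ((Fintype.card β : ℝ) / μ) := add_le_add h1 h2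
  _ ≤ 2 * μ * Real.logb 2 (((Fintype.card α' : ℝ) * Fintype.card β) / μ) := by
      nlinarith [hlogle]
end
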